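/- Let G be a finite simple graph with maximum degree Δ ≥ 2 that contains no clique on Δ vertices, and let C be a set of at least Δ + 1 vertices of G. Then every clique contained in C has at most |C| − 2 vertices, and consequently the induced subgraph G[C] contains a 2-anti-matching or a 3-independent set. -/

import Mathlib

/-- Let `G` be a finite simple graph with maximum degree `Δ ≥ 2` that contains
no clique on `Δ` vertices, and let `C` be a set of at least `Δ + 1` vertices of `G`.
Then every clique contained in `C` has at most `|C| − 2` vertices, and consequently the
induced subgraph `G[C]` contains a 2-anti-matching or a 3-independent set. -/
theorem large_cliquefree_solitary
    {V : Type*} [Fintype V] [DecidableEq V] (G : SimpleGraph V) [DecidableRel G.Adj]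
    (Δ : ℕ) (hΔ2 : 2 ≤ Δ) (hΔ : G.maxDegree = Δ) (hfree : G.CliqueFree Δ)
    (C : Finset V) (hC : Δ + 1 ≤ C.card) :
    (∀ K : Finset V, K ⊆ C → G.IsClique (K : Set V) → K.card + 2 ≤ C.card) ∧
      ((∃ a b c d : V, a ∈ C ∧ b ∈ C ∧ c ∈ C ∧ d ∈ C ∧
          a ≠ b ∧ c ≠ d ∧ a ≠ c ∧ a ≠ d ∧ b ≠ c ∧ b ≠ d ∧
          ¬ G.Adj a b ∧ ¬ G.Adj c d) ∨
       (∃ x y z : V, x ∈ C ∧ y ∈ C ∧ z ∈ C ∧ x ≠ y ∧ x ≠ z ∧ y ≠ z ∧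
          ¬ G.Adj x y ∧ ¬ G.Adj x z ∧ ¬ G.Adj y z)) := by
  -- Any clique has fewer than Δ vertices.
  have hclique : ∀ K : Finset V, G.IsClique (K : Set V) → K.card + 1 ≤ Δ := by
    intro K hK
    by_contra h
    push_neg at h
    have hΔle : Δ ≤ K.card := by omega
    obtain ⟨K', hK'sub, hK'card⟩ := Finset.exists_subset_card_eq hΔle
    exact hfree K' ⟨hK.subset (by exact_mod_cast hK'sub), hK'card⟩
  refine ⟨fun K _ hK => by have := hclique K hK; omega, ?_⟩
  -- C is not a clique, hence there is an anti-edge a b in C.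
  have hnc : ¬ G.IsClique (C : Set V) := fun h => by have := hclique C h; omega
  rw [SimpleGraph.isClique_iff, Set.Pairwise] at hnc
  push_neg at hnc
  obtain ⟨a, ha, b, hb, hab, hnadj⟩ := hnc
  simp only [Finset.mem_coe] at ha hb
  set C' : Finset V := (C \ {a, b}) with hC'
  have haC' : a ∉ C' := by simp [hC']
  have hbC' : b ∉ C' := by simp [hC']
  have hC'sub : C' ⊆ C := Finset.sdiff_subset
  have hC'card : C.card - 2 ≤ C'.card := by
    have h1 : C'.card + ({a, b} : Finset V).card = C.card := by
      rw [hC']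
      exact Finset.card_sdiff_add_card_eq_card (Finset.insert_subset ha (by simpa using hb))
    have h2 : ({a, b} : Finset V).card ≤ 2 := Finset.card_insert_le _ _ |>.trans (by simp)
    omega
  by_cases hcase : ∃ c ∈ C', ∃ d ∈ C', c ≠ d ∧ ¬ G.Adj c d
  · obtain ⟨c, hc, d, hd, hcd, hnadj'⟩ := hcase
    exact Or.inl ⟨a, b, c, d, ha, hb, hC'sub hc, hC'sub hd, hab, hcd,
      fun h => haC' (h ▸ hc), fun h => haC' (h ▸ hd),
      fun h => hbC' (h ▸ hc), fun h => hbC' (h ▸ hd), hnadj, hnadj'⟩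
  · -- C' is a clique of size exactly Δ - 1
    push_neg at hcase
    have hC'clique : G.IsClique (C' : Set V) := by
      intro x hx y hy hxy
      exact hcase x (Finset.mem_coe.mp hx) y (Finset.mem_coe.mp hy) hxy
    -- a misses some vertex of C'
    have key : ∀ v : V, v ∉ C' → v ∈ C → ∃ c ∈ C', ¬ G.Adj v c := by
      intro v hv _
      by_contra h
      push_neg at h
      have : G.IsClique ((insert v C' : Finset V) : Set V) := by
        rw [Finset.coe_insert]
        refine SimpleGraph.IsClique.insert hC'clique fun c hc hne => h c hc
      have hcard : (insert v C').card + 1 ≤ Δ := hclique _ this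
      rw [Finset.card_insert_of_notMem hv] at hcard
      have := hclique C' hC'clique
      omega
    obtain ⟨c, hc, hac⟩ := key a haC' ha
    obtain ⟨d, hd, hbd⟩ := key b hbC' hb
    by_cases hcd : c = d
    · subst hcd
      exact Or.inr ⟨a, b, c, ha, hb, hC'sub hc, hab,
        fun h => haC' (h ▸ hc), fun h => hbC' (h ▸ hc), hnadj, hac, hbd⟩
    · exact Or.inl ⟨a, c, b, d, ha, hC'sub hc, hb, hC'sub hd,
        fun h => haC' (h ▸ hc), fun h => hbC' (h ▸ hd), hab,
        fun h => haC' (h ▸ hd), (fun h => hbC' (h.symm ▸ hc)), hcd, hac, hbd⟩
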